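/- Let X be a random element of a measurable space 𝒳, A ∈ {0,1} a random treatment indicator, Y(0), Y(1) bounded real random variables with (Y(0), Y(1)) conditionally independent of A given X (unconfoundedness), and Y = Y(A) the factual outcome. Let e(X) = P(A = 1 | X), μ(X, a) = E[Y(a) | X], and τ(X) = μ(X,1) − μ(X,0). Suppose ē ≤ e(X) ≤ 1 − ē almost surely for some ē > 0. Let w : 𝒳 → ℝ be bounded measurable, μ̌ : 𝒳 × {0,1} → ℝ bounded measurable, and ě : 𝒳 → ℝ measurable with ē ≤ ě(X) ≤ 1 − ē almost surely. If ě(X) = e(X) almost surely, or if μ̌(X, a) = μ(X, a) almost surely for a = 0 and a = 1, then E[ w(X) ( μ̌(X,1) − μ̌(X,0) + (A − ě(X)) / (ě(X)(1 − ě(X))) · (Y − μ̌(X,A)) ) ] = E[ w(X) τ(X) ]. -/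

import Mathlib

open MeasureTheory ProbabilityTheory

lemma DR.integrable_of_ae_bound {Ω : Type*} [MeasurableSpace Ω] {μ : Measure Ω}
    [IsFiniteMeasure μ] {h : Ω → ℝ} (hm : AEStronglyMeasurable h μ) {C : ℝ}
    (hb : ∀ᵐ ω ∂μ, |h ω| ≤ C) : Integrable h μ := by
  refine Integrable.mono' (integrable_const C) hm ?_
  filter_upwards [hb] with ω hω
  simpa [Real.norm_eq_abs] using hω

/-- product rule for conditional expectation under conditional independence,
for a bounded real variable and a Bool indicator. -/
lemma DR.condexp_mul_indicator {Ω 𝒳 : Type*} [mΩ : MeasurableSpace Ω] [StandardBorelSpace Ω]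
    {m𝒳 : MeasurableSpace 𝒳} (X : Ω → 𝒳) (hX : Measurable X)
    (μ : Measure Ω) [IsProbabilityMeasure μ]
    {f : Ω → ℝ} (hf : Measurable f) {C : ℝ} (hfb : ∀ ω, |f ω| ≤ C)
    {A : Ω → Bool} (hA : Measurable A)
    (hind : ProbabilityTheory.CondIndepFun (MeasurableSpace.comap X m𝒳) hX.comap_le f A μ) :
    μ[fun ω => f ω * (if A ω then (1:ℝ) else 0) | MeasurableSpace.comap X m𝒳]
      =ᵐ[μ] fun ω => (μ[f | MeasurableSpace.comap X m𝒳]) ω *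
        (μ[fun ω' => (if A ω' then (1:ℝ) else 0) | MeasurableSpace.comap X m𝒳]) ω := by
  have hm' : MeasurableSpace.comap X m𝒳 ≤ mΩ := hX.comap_le
  set I : Ω → ℝ := fun ω => if A ω then (1:ℝ) else 0 with hIdef
  have hIm : Measurable I := (measurable_from_top (f := fun b : Bool => if b then (1:ℝ) else 0)).comp hA
  have hIb : ∀ ω, |I ω| ≤ 1 := by
    intro ω; by_cases h : A ω <;> simp [hIdef, h]
  have hf_int : Integrable f μ := DR.integrable_of_ae_bound hf.aestronglyMeasurable
    (Filter.Eventually.of_forall hfb)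
  have hI_int : Integrable I μ := DR.integrable_of_ae_bound hIm.aestronglyMeasurable
    (Filter.Eventually.of_forall hIb)
  have hfI_int : Integrable (fun ω => f ω * I ω) μ := by
    refine DR.integrable_of_ae_bound (hf.mul hIm).aestronglyMeasurable
      (C := |C|) (Filter.Eventually.of_forall fun ω => ?_)
    calc |f ω * I ω| = |f ω| * |I ω| := abs_mul _ _
      _ ≤ |C| * 1 := mul_le_mul ((hfb ω).trans (le_abs_self C)) (hIb ω) (abs_nonneg _) (abs_nonneg _)
      _ = |C| := mul_one _
  set κ := condExpKernel μ (MeasurableSpace.comap X m𝒳) with hκ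
  -- a.e. statement for the countable family of generating sets
  have hsets : ∀ᵐ ω ∂μ, ∀ q : ℚ, ∀ t : Set Bool,
      κ ω (f ⁻¹' Set.Iic (q:ℝ) ∩ A ⁻¹' t) = κ ω (f ⁻¹' Set.Iic (q:ℝ)) * κ ω (A ⁻¹' t) := by
    rw [ae_all_iff]; intro q
    rw [ae_all_iff]; intro t
    exact ae_of_ae_trim hm'
      (Kernel.indepFun_iff_measure_inter_preimage_eq_mul.mp hind _ _ measurableSet_Iic trivial)
  -- a.e. independence of f and A under the kernel
  have hprod : ∀ᵐ ω ∂μ, ∫ y, f y * I y ∂(κ ω) = (∫ y, f y ∂(κ ω)) * ∫ y, I y ∂(κ ω) := by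
    filter_upwards [hsets] with ω hω
    set p1 : Set (Set Ω) := {s | ∃ q : ℚ, f ⁻¹' Set.Iic (q:ℝ) = s} with hp1def
    set p2 : Set (Set Ω) := {s | ∃ t : Set Bool, A ⁻¹' t = s} with hp2def
    have hpi1 : IsPiSystem p1 := by
      rintro s ⟨q1, rfl⟩ t ⟨q2, rfl⟩ -
      exact ⟨min q1 q2, by rw [← Set.preimage_inter, Set.Iic_inter_Iic]; norm_cast⟩
    have hpi2 : IsPiSystem p2 := by
      rintro s ⟨t1, rfl⟩ t ⟨t2, rfl⟩ -
      exact ⟨t1 ∩ t2, Set.preimage_inter⟩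
    have hgen1 : MeasurableSpace.comap f Real.measurableSpace
        = MeasurableSpace.generateFrom p1 := by
      rw [show (Real.measurableSpace : MeasurableSpace ℝ) = borel ℝ from rfl,
        Real.borel_eq_generateFrom_Iic_rat, MeasurableSpace.comap_generateFrom]
      congr 1
      ext s
      simp only [Set.mem_image, Set.mem_iUnion, Set.mem_singleton_iff, hp1def, Set.mem_setOf_eq]
      constructor
      · rintro ⟨u, ⟨q, rfl⟩, rfl⟩; exact ⟨q, rfl⟩
      · rintro ⟨q, rfl⟩; exact ⟨Set.Iic (q:ℝ), ⟨q, rfl⟩, rfl⟩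
    have hgen2 : MeasurableSpace.comap A ⊤ = MeasurableSpace.generateFrom p2 := by
      refine le_antisymm ?_ ?_
      · rintro s ⟨t, -, rfl⟩
        exact MeasurableSpace.measurableSet_generateFrom ⟨t, rfl⟩
      · refine MeasurableSpace.generateFrom_le ?_
        rintro s ⟨t, rfl⟩
        exact ⟨t, trivial, rfl⟩
    have hindep : ProbabilityTheory.Indep (MeasurableSpace.comap f Real.measurableSpace)
        (MeasurableSpace.comap A ⊤) (κ ω) := by
      refine ProbabilityTheory.IndepSets.indep hf.comap_le hA.comap_le hpi1 hpi2 hgen1 hgen2 ?_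
      rintro s t ⟨q, rfl⟩ ⟨tb, rfl⟩
      exact Filter.Eventually.of_forall fun _ => hω q tb
    have hfA : ProbabilityTheory.IndepFun f A (κ ω) := hindep
    have hfI : ProbabilityTheory.IndepFun f I (κ ω) :=
      hfA.comp measurable_id (measurable_from_top (f := fun b : Bool => if b then (1:ℝ) else 0))
    have h1 : Integrable f (κ ω) := DR.integrable_of_ae_bound hf.aestronglyMeasurable
      (C := |C|) (Filter.Eventually.of_forall fun ω' => (hfb ω').trans (le_abs_self C))
    have h2 : Integrable I (κ ω) := DR.integrable_of_ae_bound hIm.aestronglyMeasurable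
      (Filter.Eventually.of_forall hIb)
    exact ProbabilityTheory.IndepFun.integral_mul_eq_mul_integral hfI h1.1 h2.1
  have e1 := condExp_ae_eq_integral_condExpKernel hm' hfI_int
  have e2 := condExp_ae_eq_integral_condExpKernel hm' hf_int
  have e3 := condExp_ae_eq_integral_condExpKernel hm' hI_int
  filter_upwards [e1, e2, e3, hprod] with ω h1 h2 h3 h4
  rw [h1, h2, h3, h4]

/-- Under unconfoundedness and overlap, the doubly-robust weighted estimand
equals `E[w(X) τ(X)]` provided either the propensity model or the outcome model is correct. -/
theorem doubly_robust_weighted_ate {Ω 𝒳 : Type*} [mΩ : MeasurableSpace Ω]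
    [StandardBorelSpace Ω] {m𝒳 : MeasurableSpace 𝒳}
    (P : Measure Ω) [IsProbabilityMeasure P]
    (X : Ω → 𝒳) (hX : Measurable X)
    (A : Ω → Bool) (hA : Measurable A)
    (Y0 Y1 : Ω → ℝ) (hY0m : Measurable Y0) (hY1m : Measurable Y1)
    (B : ℝ) (hY0b : ∀ ω, |Y0 ω| ≤ B) (hY1b : ∀ ω, |Y1 ω| ≤ B)
    (hunconf : ProbabilityTheory.CondIndepFun (MeasurableSpace.comap X m𝒳) hX.comap_le
      (fun ω => (Y0 ω, Y1 ω)) A P)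
    (Y : Ω → ℝ) (hYdef : Y = fun ω => if A ω then Y1 ω else Y0 ω)
    (eX : Ω → ℝ)
    (heX : eX = P[fun ω => (if A ω then (1 : ℝ) else 0) | MeasurableSpace.comap X m𝒳])
    (μ0 μ1 : Ω → ℝ)
    (hμ0 : μ0 = P[Y0 | MeasurableSpace.comap X m𝒳])
    (hμ1 : μ1 = P[Y1 | MeasurableSpace.comap X m𝒳])
    (ebar : ℝ) (hebar : 0 < ebar)
    (hoverlap : ∀ᵐ ω ∂P, ebar ≤ eX ω ∧ eX ω ≤ 1 - ebar)
    (w : 𝒳 → ℝ) (hwm : Measurable w) (Cw : ℝ) (hwb : ∀ x, |w x| ≤ Cw)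
    (μc : 𝒳 → Bool → ℝ) (hμcm : ∀ a, Measurable (fun x => μc x a))
    (Cμ : ℝ) (hμcb : ∀ x a, |μc x a| ≤ Cμ)
    (ec : 𝒳 → ℝ) (hecm : Measurable ec)
    (hecov : ∀ᵐ ω ∂P, ebar ≤ ec (X ω) ∧ ec (X ω) ≤ 1 - ebar)
    (hcase : ((fun ω => ec (X ω)) =ᵐ[P] eX) ∨
      (((fun ω => μc (X ω) false) =ᵐ[P] μ0) ∧ ((fun ω => μc (X ω) true) =ᵐ[P] μ1))) :
    ∫ ω, w (X ω) * (μc (X ω) true - μc (X ω) false +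
        ((if A ω then (1 : ℝ) else 0) - ec (X ω)) / (ec (X ω) * (1 - ec (X ω))) *
          (Y ω - μc (X ω) (A ω))) ∂P
      = ∫ ω, w (X ω) * (μ1 ω - μ0 ω) ∂P := by
  subst hYdef heX hμ0 hμ1
  have hm' : MeasurableSpace.comap X m𝒳 ≤ mΩ := hX.comap_le
  have hXm' : Measurable[MeasurableSpace.comap X m𝒳] X := measurable_iff_comap_le.mpr le_rfl
  -- notation
  set I : Ω → ℝ := fun ω => if A ω then (1:ℝ) else 0 with hIdef
  have hIm : Measurable I :=
    (measurable_from_top (f := fun b : Bool => if b then (1:ℝ) else 0)).comp hA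
  have hIb : ∀ ω, |I ω| ≤ 1 := by intro ω; by_cases h : A ω <;> simp [hIdef, h]
  have hNb : ∀ ω, |1 - I ω| ≤ 1 := by intro ω; by_cases h : A ω <;> simp [hIdef, h]
  -- measurability of building blocks
  have hwX : Measurable (fun ω => w (X ω)) := hwm.comp hX
  have hmc1 : Measurable (fun ω => μc (X ω) true) := (hμcm true).comp hX
  have hmc0 : Measurable (fun ω => μc (X ω) false) := (hμcm false).comp hX
  have hecX : Measurable (fun ω => ec (X ω)) := hecm.comp hX
  have hg1m' : Measurable[MeasurableSpace.comap X m𝒳] (fun ω => w (X ω) * (ec (X ω))⁻¹) :=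
    (hwm.mul hecm.inv).comp hXm'
  have hg0m' : Measurable[MeasurableSpace.comap X m𝒳] (fun ω => w (X ω) * (1 - ec (X ω))⁻¹) :=
    (hwm.mul (measurable_const.sub hecm).inv).comp hXm'
  have hg1 : Measurable (fun ω => w (X ω) * (ec (X ω))⁻¹) := hg1m'.mono hm' le_rfl
  have hg0 : Measurable (fun ω => w (X ω) * (1 - ec (X ω))⁻¹) := hg0m'.mono hm' le_rfl
  have hmc1m' : Measurable[MeasurableSpace.comap X m𝒳] (fun ω => μc (X ω) true) :=
    (hμcm true).comp hXm'
  have hmc0m' : Measurable[MeasurableSpace.comap X m𝒳] (fun ω => μc (X ω) false) :=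
    (hμcm false).comp hXm'
  -- conditional independence of each potential outcome with A
  have hci1 : ProbabilityTheory.CondIndepFun (MeasurableSpace.comap X m𝒳) hX.comap_le Y1 A P :=
    hunconf.comp measurable_snd measurable_id
  have hci0 : ProbabilityTheory.CondIndepFun (MeasurableSpace.comap X m𝒳) hX.comap_le Y0 A P :=
    hunconf.comp measurable_fst measurable_id
  -- a.e. denominator control
  have hden : ∀ᵐ ω ∂P, ec (X ω) ≠ 0 ∧ 1 - ec (X ω) ≠ 0 ∧
      |(ec (X ω))⁻¹| ≤ ebar⁻¹ ∧ |(1 - ec (X ω))⁻¹| ≤ ebar⁻¹ := by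
    filter_upwards [hecov] with ω hω
    have h1 : 0 < ec (X ω) := lt_of_lt_of_le hebar hω.1
    have h2 : 0 < 1 - ec (X ω) := by linarith [hω.2]
    refine ⟨ne_of_gt h1, ne_of_gt h2, ?_, ?_⟩
    · rw [abs_of_nonneg (inv_nonneg.mpr h1.le)]
      exact inv_anti₀ hebar hω.1
    · rw [abs_of_nonneg (inv_nonneg.mpr h2.le)]
      exact inv_anti₀ hebar (by linarith [hω.2])
  -- integrable building blocks
  have hY1_int : Integrable Y1 P := DR.integrable_of_ae_bound hY1m.aestronglyMeasurable
    (Filter.Eventually.of_forall hY1b)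
  have hY0_int : Integrable Y0 P := DR.integrable_of_ae_bound hY0m.aestronglyMeasurable
    (Filter.Eventually.of_forall hY0b)
  have hI_int : Integrable I P := DR.integrable_of_ae_bound hIm.aestronglyMeasurable
    (Filter.Eventually.of_forall hIb)
  -- the three pieces
  set T1 : Ω → ℝ := fun ω => w (X ω) * (μc (X ω) true - μc (X ω) false) with hT1def
  set T2 : Ω → ℝ := fun ω => (Y1 ω - μc (X ω) true) * I ω with hT2def
  set T3 : Ω → ℝ := fun ω => (Y0 ω - μc (X ω) false) * (1 - I ω) with hT3def
  have hT2m : Measurable T2 := (hY1m.sub hmc1).mul hIm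
  have hT3m : Measurable T3 := (hY0m.sub hmc0).mul (measurable_const.sub hIm)
  have hT2b : ∀ ω, |T2 ω| ≤ |B| + |Cμ| := by
    intro ω
    calc |T2 ω| = |Y1 ω - μc (X ω) true| * |I ω| := abs_mul _ _
      _ ≤ (|B| + |Cμ|) * 1 := by
          refine mul_le_mul ?_ (hIb ω) (abs_nonneg _) (by positivity)
          exact (abs_sub _ _).trans (add_le_add ((hY1b ω).trans (le_abs_self B))
            ((hμcb _ _).trans (le_abs_self Cμ)))
      _ = |B| + |Cμ| := mul_one _
  have hT3b : ∀ ω, |T3 ω| ≤ |B| + |Cμ| := by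
    intro ω
    calc |T3 ω| = |Y0 ω - μc (X ω) false| * |1 - I ω| := abs_mul _ _
      _ ≤ (|B| + |Cμ|) * 1 := by
          refine mul_le_mul ?_ (hNb ω) (abs_nonneg _) (by positivity)
          exact (abs_sub _ _).trans (add_le_add ((hY0b ω).trans (le_abs_self B))
            ((hμcb _ _).trans (le_abs_self Cμ)))
      _ = |B| + |Cμ| := mul_one _
  have hT1_int : Integrable T1 P := by
    refine DR.integrable_of_ae_bound (hwX.mul (hmc1.sub hmc0)).aestronglyMeasurable
      (C := |Cw| * (|Cμ| + |Cμ|)) (Filter.Eventually.of_forall fun ω => ?_)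
    rw [abs_mul]
    refine mul_le_mul ((hwb _).trans (le_abs_self Cw)) ((abs_sub _ _).trans (add_le_add
      ((hμcb _ _).trans (le_abs_self Cμ)) ((hμcb _ _).trans (le_abs_self Cμ))))
      (abs_nonneg _) (abs_nonneg _)
  have hT2_int : Integrable T2 P := DR.integrable_of_ae_bound hT2m.aestronglyMeasurable
    (Filter.Eventually.of_forall hT2b)
  have hT3_int : Integrable T3 P := DR.integrable_of_ae_bound hT3m.aestronglyMeasurable
    (Filter.Eventually.of_forall hT3b)
  have hg1b : ∀ᵐ ω ∂P, |w (X ω) * (ec (X ω))⁻¹| ≤ |Cw| * ebar⁻¹ := by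
    filter_upwards [hden] with ω hω
    rw [abs_mul]
    exact mul_le_mul ((hwb _).trans (le_abs_self Cw)) hω.2.2.1 (abs_nonneg _) (abs_nonneg _)
  have hg0b : ∀ᵐ ω ∂P, |w (X ω) * (1 - ec (X ω))⁻¹| ≤ |Cw| * ebar⁻¹ := by
    filter_upwards [hden] with ω hω
    rw [abs_mul]
    exact mul_le_mul ((hwb _).trans (le_abs_self Cw)) hω.2.2.2 (abs_nonneg _) (abs_nonneg _)
  have hg1T2_int : Integrable (fun ω => (w (X ω) * (ec (X ω))⁻¹) * T2 ω) P := by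
    refine DR.integrable_of_ae_bound (hg1.mul hT2m).aestronglyMeasurable
      (C := (|Cw| * ebar⁻¹) * (|B| + |Cμ|)) ?_
    filter_upwards [hg1b] with ω hω
    rw [abs_mul]
    exact mul_le_mul hω (hT2b ω) (abs_nonneg _) ((abs_nonneg _).trans hω)
  have hg0T3_int : Integrable (fun ω => (w (X ω) * (1 - ec (X ω))⁻¹) * T3 ω) P := by
    refine DR.integrable_of_ae_bound (hg0.mul hT3m).aestronglyMeasurable
      (C := (|Cw| * ebar⁻¹) * (|B| + |Cμ|)) ?_
    filter_upwards [hg0b] with ω hω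
    rw [abs_mul]
    exact mul_le_mul hω (hT3b ω) (abs_nonneg _) ((abs_nonneg _).trans hω)
  -- more integrability (products with I)
  have hY1I_int : Integrable (fun ω => Y1 ω * I ω) P := by
    refine DR.integrable_of_ae_bound (hY1m.mul hIm).aestronglyMeasurable (C := |B|)
      (Filter.Eventually.of_forall fun ω => ?_)
    rw [abs_mul]
    calc |Y1 ω| * |I ω| ≤ |B| * 1 := mul_le_mul ((hY1b ω).trans (le_abs_self B)) (hIb ω)
          (abs_nonneg _) (abs_nonneg _)
      _ = |B| := mul_one _
  have hY0I_int : Integrable (fun ω => Y0 ω * I ω) P := by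
    refine DR.integrable_of_ae_bound (hY0m.mul hIm).aestronglyMeasurable (C := |B|)
      (Filter.Eventually.of_forall fun ω => ?_)
    rw [abs_mul]
    calc |Y0 ω| * |I ω| ≤ |B| * 1 := mul_le_mul ((hY0b ω).trans (le_abs_self B)) (hIb ω)
          (abs_nonneg _) (abs_nonneg _)
      _ = |B| := mul_one _
  have hmc1I_int : Integrable (fun ω => μc (X ω) true * I ω) P := by
    refine DR.integrable_of_ae_bound (hmc1.mul hIm).aestronglyMeasurable (C := |Cμ|)
      (Filter.Eventually.of_forall fun ω => ?_)
    rw [abs_mul]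
    calc |μc (X ω) true| * |I ω| ≤ |Cμ| * 1 := mul_le_mul ((hμcb _ _).trans (le_abs_self Cμ))
          (hIb ω) (abs_nonneg _) (abs_nonneg _)
      _ = |Cμ| := mul_one _
  have hmc0N_int : Integrable (fun ω => μc (X ω) false * (1 - I ω)) P := by
    refine DR.integrable_of_ae_bound (hmc0.mul (measurable_const.sub hIm)).aestronglyMeasurable
      (C := |Cμ|) (Filter.Eventually.of_forall fun ω => ?_)
    rw [abs_mul]
    calc |μc (X ω) false| * |1 - I ω| ≤ |Cμ| * 1 := mul_le_mul
          ((hμcb _ _).trans (le_abs_self Cμ)) (hNb ω) (abs_nonneg _) (abs_nonneg _)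
      _ = |Cμ| := mul_one _
  -- conditional expectation computations
  have hE1 : P[fun ω => Y1 ω * I ω | MeasurableSpace.comap X m𝒳]
      =ᵐ[P] fun ω => (P[Y1 | MeasurableSpace.comap X m𝒳]) ω *
        (P[I | MeasurableSpace.comap X m𝒳]) ω :=
    DR.condexp_mul_indicator X hX P hY1m hY1b hA hci1
  have hE0 : P[fun ω => Y0 ω * I ω | MeasurableSpace.comap X m𝒳]
      =ᵐ[P] fun ω => (P[Y0 | MeasurableSpace.comap X m𝒳]) ω *
        (P[I | MeasurableSpace.comap X m𝒳]) ω :=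
    DR.condexp_mul_indicator X hX P hY0m hY0b hA hci0
  have hP1 : P[fun ω => μc (X ω) true * I ω | MeasurableSpace.comap X m𝒳]
      =ᵐ[P] fun ω => μc (X ω) true * (P[I | MeasurableSpace.comap X m𝒳]) ω := by
    have hconv : (fun ω => μc (X ω) true * I ω) = (fun ω => μc (X ω) true) * I := rfl
    rw [hconv]
    refine (condExp_mul_of_stronglyMeasurable_left hmc1m'.stronglyMeasurable hmc1I_int hI_int).trans ?_
    exact Filter.Eventually.of_forall fun ω => by simp [Pi.mul_apply]
  have hP0 : P[fun ω => μc (X ω) false * (1 - I ω) | MeasurableSpace.comap X m𝒳]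
      =ᵐ[P] fun ω => μc (X ω) false * (1 - (P[I | MeasurableSpace.comap X m𝒳]) ω) := by
    have hconv : (fun ω => μc (X ω) false * (1 - I ω))
        = (fun ω => μc (X ω) false) * (fun ω => 1 - I ω) := rfl
    rw [hconv]
    have hN : P[fun ω => 1 - I ω | MeasurableSpace.comap X m𝒳]
        =ᵐ[P] fun ω => 1 - (P[I | MeasurableSpace.comap X m𝒳]) ω := by
      have hconv2 : (fun ω => 1 - I ω) = (fun _ : Ω => (1:ℝ)) - I := rfl
      rw [hconv2]
      refine (condExp_sub (integrable_const 1) hI_int _).trans ?_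
      rw [condExp_const hm']
      exact Filter.Eventually.of_forall fun ω => by simp [Pi.sub_apply]
    refine (condExp_mul_of_stronglyMeasurable_left hmc0m'.stronglyMeasurable hmc0N_int
      ((integrable_const (1:ℝ)).sub hI_int)).trans ?_
    filter_upwards [hN] with ω hω
    simp only [Pi.mul_apply]
    rw [hω]
  -- conditional expectation of T2
  have hc2raw : P[T2 | MeasurableSpace.comap X m𝒳]
      =ᵐ[P] fun ω => ((P[Y1 | MeasurableSpace.comap X m𝒳]) ω - μc (X ω) true) *
        (P[I | MeasurableSpace.comap X m𝒳]) ω := by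
    have hsplit : T2 = (fun ω => Y1 ω * I ω) - fun ω => μc (X ω) true * I ω := by
      funext ω; simp only [hT2def, Pi.sub_apply]; ring
    rw [hsplit]
    refine (condExp_sub hY1I_int hmc1I_int _).trans ?_
    filter_upwards [hE1, hP1] with ω h1 h2
    simp only [Pi.sub_apply, h1, h2]
    ring
  -- conditional expectation of T3
  have hc3raw : P[T3 | MeasurableSpace.comap X m𝒳]
      =ᵐ[P] fun ω => ((P[Y0 | MeasurableSpace.comap X m𝒳]) ω - μc (X ω) false) *
        (1 - (P[I | MeasurableSpace.comap X m𝒳]) ω) := by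
    have hsplit : T3 = (fun ω => Y0 ω * (1 - I ω)) - fun ω => μc (X ω) false * (1 - I ω) := by
      funext ω; simp only [hT3def, Pi.sub_apply]; ring
    have hY0N_int : Integrable (fun ω => Y0 ω * (1 - I ω)) P := by
      have hconv : (fun ω => Y0 ω * (1 - I ω)) = fun ω => Y0 ω - Y0 ω * I ω := by
        funext ω; ring
      rw [hconv]
      exact hY0_int.sub hY0I_int
    have hD : P[fun ω => Y0 ω * (1 - I ω) | MeasurableSpace.comap X m𝒳]
        =ᵐ[P] fun ω => (P[Y0 | MeasurableSpace.comap X m𝒳]) ω *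
          (1 - (P[I | MeasurableSpace.comap X m𝒳]) ω) := by
      have hconv : (fun ω => Y0 ω * (1 - I ω)) = Y0 - fun ω => Y0 ω * I ω := by
        funext ω; simp only [Pi.sub_apply]; ring
      rw [hconv]
      refine (condExp_sub hY0_int hY0I_int _).trans ?_
      filter_upwards [hE0] with ω h1
      simp only [Pi.sub_apply, h1]
      ring
    rw [hsplit]
    refine (condExp_sub hY0N_int hmc0N_int _).trans ?_
    filter_upwards [hD, hP0] with ω h1 h2
    simp only [Pi.sub_apply, h1, h2]
    ring
  -- pull-out of the weights
  have hc2 : P[fun ω => (w (X ω) * (ec (X ω))⁻¹) * T2 ω | MeasurableSpace.comap X m𝒳]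
      =ᵐ[P] fun ω => (w (X ω) * (ec (X ω))⁻¹) *
        (((P[Y1 | MeasurableSpace.comap X m𝒳]) ω - μc (X ω) true) *
          (P[I | MeasurableSpace.comap X m𝒳]) ω) := by
    have hconv : (fun ω => (w (X ω) * (ec (X ω))⁻¹) * T2 ω)
        = (fun ω => w (X ω) * (ec (X ω))⁻¹) * T2 := rfl
    rw [hconv]
    refine (condExp_mul_of_stronglyMeasurable_left hg1m'.stronglyMeasurable hg1T2_int hT2_int).trans ?_
    filter_upwards [hc2raw] with ω hω
    simp only [Pi.mul_apply]
    rw [hω]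
  have hc3 : P[fun ω => (w (X ω) * (1 - ec (X ω))⁻¹) * T3 ω | MeasurableSpace.comap X m𝒳]
      =ᵐ[P] fun ω => (w (X ω) * (1 - ec (X ω))⁻¹) *
        (((P[Y0 | MeasurableSpace.comap X m𝒳]) ω - μc (X ω) false) *
          (1 - (P[I | MeasurableSpace.comap X m𝒳]) ω)) := by
    have hconv : (fun ω => (w (X ω) * (1 - ec (X ω))⁻¹) * T3 ω)
        = (fun ω => w (X ω) * (1 - ec (X ω))⁻¹) * T3 := rfl
    rw [hconv]
    refine (condExp_mul_of_stronglyMeasurable_left hg0m'.stronglyMeasurable hg0T3_int hT3_int).trans ?_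
    filter_upwards [hc3raw] with ω hω
    simp only [Pi.mul_apply]
    rw [hω]
  -- Step A: rewrite the LHS integrand
  have stepA : ∫ ω, w (X ω) * (μc (X ω) true - μc (X ω) false +
        ((if A ω then (1 : ℝ) else 0) - ec (X ω)) / (ec (X ω) * (1 - ec (X ω))) *
          ((if A ω then Y1 ω else Y0 ω) - μc (X ω) (A ω))) ∂P
      = ∫ ω, (T1 ω + (w (X ω) * (ec (X ω))⁻¹) * T2 ω
          - (w (X ω) * (1 - ec (X ω))⁻¹) * T3 ω) ∂P := by
    refine integral_congr_ae ?_
    filter_upwards [hden] with ω hω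
    obtain ⟨h0, h1, -, -⟩ := hω
    by_cases hb : A ω
    · simp only [hb, if_true, hT1def, hT2def, hT3def, hIdef]
      field_simp
      ring
    · simp only [hb, if_false, hT1def, hT2def, hT3def, hIdef, Bool.false_eq_true]
      field_simp
      ring
  rw [stepA]
  have i2 : Integrable (fun ω => (w (X ω) * (ec (X ω))⁻¹) *
      (((P[Y1 | MeasurableSpace.comap X m𝒳]) ω - μc (X ω) true) *
        (P[I | MeasurableSpace.comap X m𝒳]) ω)) P := integrable_condExp.congr hc2
  have i3 : Integrable (fun ω => (w (X ω) * (1 - ec (X ω))⁻¹) *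
      (((P[Y0 | MeasurableSpace.comap X m𝒳]) ω - μc (X ω) false) *
        (1 - (P[I | MeasurableSpace.comap X m𝒳]) ω))) P := integrable_condExp.congr hc3
  calc ∫ ω, (T1 ω + (w (X ω) * (ec (X ω))⁻¹) * T2 ω
          - (w (X ω) * (1 - ec (X ω))⁻¹) * T3 ω) ∂P
      = (∫ ω, (T1 ω + (w (X ω) * (ec (X ω))⁻¹) * T2 ω) ∂P)
          - ∫ ω, (w (X ω) * (1 - ec (X ω))⁻¹) * T3 ω ∂P :=
        integral_sub (hT1_int.add hg1T2_int) hg0T3_int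
    _ = ((∫ ω, T1 ω ∂P) + ∫ ω, (w (X ω) * (ec (X ω))⁻¹) * T2 ω ∂P)
          - ∫ ω, (w (X ω) * (1 - ec (X ω))⁻¹) * T3 ω ∂P :=
        congrArg (fun z => z - ∫ ω, (w (X ω) * (1 - ec (X ω))⁻¹) * T3 ω ∂P)
          (integral_add hT1_int hg1T2_int)
    _ = ((∫ ω, T1 ω ∂P)
          + ∫ ω, (P[fun ω => (w (X ω) * (ec (X ω))⁻¹) * T2 ω
              | MeasurableSpace.comap X m𝒳]) ω ∂P)
          - ∫ ω, (P[fun ω => (w (X ω) * (1 - ec (X ω))⁻¹) * T3 ω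
              | MeasurableSpace.comap X m𝒳]) ω ∂P := by
        rw [integral_condExp hm', integral_condExp hm']
    _ = ((∫ ω, T1 ω ∂P)
          + ∫ ω, (w (X ω) * (ec (X ω))⁻¹) *
              (((P[Y1 | MeasurableSpace.comap X m𝒳]) ω - μc (X ω) true) *
                (P[I | MeasurableSpace.comap X m𝒳]) ω) ∂P)
          - ∫ ω, (w (X ω) * (1 - ec (X ω))⁻¹) *
              (((P[Y0 | MeasurableSpace.comap X m𝒳]) ω - μc (X ω) false) *
                (1 - (P[I | MeasurableSpace.comap X m𝒳]) ω)) ∂P := by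
        rw [integral_congr_ae hc2, integral_congr_ae hc3]
    _ = (∫ ω, (T1 ω + (w (X ω) * (ec (X ω))⁻¹) *
              (((P[Y1 | MeasurableSpace.comap X m𝒳]) ω - μc (X ω) true) *
                (P[I | MeasurableSpace.comap X m𝒳]) ω)) ∂P)
          - ∫ ω, (w (X ω) * (1 - ec (X ω))⁻¹) *
              (((P[Y0 | MeasurableSpace.comap X m𝒳]) ω - μc (X ω) false) *
                (1 - (P[I | MeasurableSpace.comap X m𝒳]) ω)) ∂P :=
        congrArg (fun z => z - ∫ ω, (w (X ω) * (1 - ec (X ω))⁻¹) *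
              (((P[Y0 | MeasurableSpace.comap X m𝒳]) ω - μc (X ω) false) *
                (1 - (P[I | MeasurableSpace.comap X m𝒳]) ω)) ∂P)
          (integral_add hT1_int i2).symm
    _ = ∫ ω, (T1 ω + (w (X ω) * (ec (X ω))⁻¹) *
              (((P[Y1 | MeasurableSpace.comap X m𝒳]) ω - μc (X ω) true) *
                (P[I | MeasurableSpace.comap X m𝒳]) ω)
          - (w (X ω) * (1 - ec (X ω))⁻¹) *
              (((P[Y0 | MeasurableSpace.comap X m𝒳]) ω - μc (X ω) false) *
                (1 - (P[I | MeasurableSpace.comap X m𝒳]) ω))) ∂P :=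
        (integral_sub (hT1_int.add i2) i3).symm
    _ = ∫ ω, w (X ω) * ((P[Y1 | MeasurableSpace.comap X m𝒳]) ω
          - (P[Y0 | MeasurableSpace.comap X m𝒳]) ω) ∂P := by
        refine integral_congr_ae ?_
        rcases hcase with hec | ⟨h0, h1⟩
        · filter_upwards [hden, hec] with ω hω he
          obtain ⟨h0, h1, -, -⟩ := hω
          simp only [hT1def]
          rw [← he]
          field_simp
          ring
        · filter_upwards [h0, h1] with ω h0ω h1ω
          simp only [hT1def]
          rw [h0ω, h1ω]
          ring
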